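/- arXiv:1206.2682 — 4 statements merged into one kernel-verified Lean document; each statement's English description precedes it below -/
import Mathlib

section
/- Every escape sequence for a string σ in a proper partial transformation T contains a subsequence which is a reduced escape sequence for σ. -/
/-- A proper partial transformation on binary strings, given by finite prefix-free
sets `Tm` (= T₋) and `Tp` (= T₊) whose cylinders cover Cantor space. -/
structure ProperPT where
  T : List Bool → List Bool
  Tm : Finset (List Bool)
  Tp : Finset (List Bool)
  mono : ∀ σ τ : List Bool, σ <+: τ → T σ <+: T τ
  prefixFree : ∀ σ ∈ Tm ∪ Tp, ∀ τ ∈ Tm ∪ Tp, σ <+: τ → σ = τ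
  covers : ∀ x : ℕ → Bool, ∃ σ ∈ Tm ∪ Tp, ∀ i : Fin σ.length, x i = σ.get i
  constAbove : ∀ τ ∈ Tm, ∀ σ : List Bool, τ <+: σ → T σ = T τ
  extAbove : ∀ τ ∈ Tp, ∀ ρ : List Bool, T (τ ++ ρ) = T τ ++ ρ
  shrink : ∀ σ ∈ Tm, (T σ).length < σ.length
  lenEq : ∀ σ ∈ Tp, (T σ).length = σ.length
  noExtend : ∀ σ ∈ Tp, ∀ τ ∈ Tm ∪ Tp, τ ≠ σ → ¬ T σ <+: T τ

namespace ProperPT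

/-- `σ` is determined: some initial segment of it lies in `T₋ ∪ T₊`. -/
def Determined (P : ProperPT) (σ : List Bool) : Prop :=
  ∃ τ ∈ P.Tm ∪ P.Tp, τ <+: σ

/-- `τ` is blocked: some `σ` has `T σ ⊐ τ` (a strict extension of `τ`). -/
def Blocked (P : ProperPT) (τ : List Bool) : Prop :=
  ∃ σ : List Bool, τ <+: P.T σ ∧ τ ≠ P.T σ

/-- `s 0, …, s n` is an escape sequence for `σ` in `P`. -/
def IsEscape (P : ProperPT) (n : ℕ) (s : ℕ → List Bool) (σ : List Bool) : Prop :=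
  s 0 = σ ∧
  (∀ i, 1 ≤ i → i ≤ n → (s i).length = (s 1).length) ∧
  (∀ i < n, P.T (s i) <+: s (i + 1)) ∧
  (∀ i < n, P.Blocked (s (i + 1)) → s (i + 1) = P.T (s i)) ∧
  P.T (s n) = [] ∧
  (∀ i ≤ n, P.Determined (s i))

/-- The escape sequence `s 0, …, s n` is reduced. -/
def IsReduced (P : ProperPT) (n : ℕ) (s : ℕ → List Bool) : Prop :=
  (∀ i ≤ n, ∀ j ≤ n, P.T (s j) <+: s i → i ≤ j + 1 ∨ P.Blocked (s i)) ∧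
  (∀ i < n, P.T (s i) ≠ [])

/-- `s 0, …, s k` is an open loop in `P`. -/
def IsOpenLoop (P : ProperPT) (k : ℕ) (s : ℕ → List Bool) : Prop :=
  (∀ i ≤ k, (s i).length = (s 0).length) ∧
  (∀ i < k, P.T (s i) = s (i + 1)) ∧
  P.T (s k) <+: s 0 ∧ P.T (s k) ≠ s 0

/-- `P` is partitioned into open loops: every string is a term of some open loop. -/
def PartitionedIntoLoops (P : ProperPT) : Prop :=
  ∀ σ : List Bool, ∃ (k : ℕ) (s : ℕ → List Bool) (i : ℕ),
    i ≤ k ∧ P.IsOpenLoop k s ∧ s i = σ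

/-- `P` is escapable. -/
def Escapable (P : ProperPT) : Prop :=
  ∀ σ : List Bool, P.Determined σ → (P.T σ).length < σ.length →
    ∃ (n : ℕ) (s : ℕ → List Bool), P.IsEscape n s σ

/-- `P` is useful: proper (by construction), partitioned into open loops, escapable. -/
def Useful (P : ProperPT) : Prop :=
  P.PartitionedIntoLoops ∧ P.Escapable

end ProperPT

/-- `x` lies in the cylinder `[σ]`. -/
def inCyl (σ : List Bool) (x : ℕ → Bool) : Prop :=
  ∀ i : Fin σ.length, x i = σ.get i

/-- Every escape sequence for a string `σ` in a proper partial
transformation `T` contains a subsequence which is a reduced escape sequence for `σ`. -/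
theorem stmt_0 (P : ProperPT) (σ : List Bool) (n : ℕ) (s : ℕ → List Bool)
    (h : P.IsEscape n s σ) :
    ∃ (m : ℕ) (g : ℕ → ℕ), g 0 = 0 ∧ (∀ i ≤ m, g i ≤ n) ∧
      StrictMonoOn g (Set.Iic m) ∧
      P.IsEscape m (fun i => s (g i)) σ ∧ P.IsReduced m (fun i => s (g i)) := by
  induction n using Nat.strong_induction_on generalizing s with
  | _ n IH =>
  by_cases hred : P.IsReduced n s
  · exact ⟨n, fun k => k, rfl, fun i hi => hi, fun a _ b _ hab => hab, h, hred⟩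
  obtain ⟨h0, hlen, hpre, hblk, hend, hdet⟩ := h
  rw [ProperPT.IsReduced, not_and_or] at hred
  rcases hred with hred | hred
  · -- Case B: condition (1) fails: shortcut the sequence
    push_neg at hred
    obtain ⟨i, hin, j, hjn, hTji, hij, hnb⟩ := hred
    have hji : j + 1 < i := by omega
    set d := i - j - 1 with hd
    have hi_eq : i = j + 1 + d := by omega
    set f : ℕ → ℕ := fun k => if k ≤ j then k else k + d with hf
    have hfmono : StrictMono f := by
      intro a b hab
      simp only [hf]
      split <;> split <;> omega
    have hfmono' : Monotone f := hfmono.monotone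
    set m : ℕ := n - d with hm
    have hdn : d ≤ n := by omega
    have hmn : m < n := by omega
    have hjm : j < m := by omega
    have hfm : f m = n := by simp only [hf]; split <;> omega
    have hfle : ∀ k ≤ m, f k ≤ n := by
      intro k hk
      calc f k ≤ f m := hfmono' hk
        _ = n := hfm
    have hfge : ∀ k, k ≤ f k := by intro k; simp only [hf]; split <;> omega
    have hfj : f j = j := by simp only [hf]; split <;> omega
    have hfj1 : f (j + 1) = i := by simp only [hf]; split <;> omega
    have hfsucc : ∀ k, k ≠ j → f (k + 1) = f k + 1 := by
      intro k hk; simp only [hf]; split <;> split <;> omega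
    have hflt : ∀ k < m, f k < n := by
      intro k hk
      calc f k < f m := hfmono hk
        _ = n := hfm
    have h' : P.IsEscape m (fun k => s (f k)) σ := by
      refine ⟨?_, ?_, ?_, ?_, ?_, ?_⟩
      · have : f 0 = 0 := by simp only [hf]; split <;> omega
        simpa [this] using h0
      · intro k h1 hk
        have e1 : (s (f k)).length = (s 1).length :=
          hlen (f k) (le_trans h1 (hfge k)) (hfle k hk)
        have e2 : (s (f 1)).length = (s 1).length :=
          hlen (f 1) (hfge 1) (hfle 1 (by omega))
        simp only [e1, e2]
      · intro k hk
        by_cases hkj : k = j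
        · subst hkj
          simpa [hfj, hfj1] using hTji
        · show P.T (s (f k)) <+: s (f (k + 1))
          rw [hfsucc k hkj]
          exact hpre (f k) (hflt k hk)
      · intro k hk hb
        replace hb : P.Blocked (s (f (k + 1))) := hb
        show s (f (k + 1)) = P.T (s (f k))
        by_cases hkj : k = j
        · subst hkj
          rw [hfj1] at hb
          exact absurd hb hnb
        · rw [hfsucc k hkj] at hb ⊢
          exact hblk (f k) (hflt k hk) hb
      · simpa [hfm] using hend
      · intro k hk
        exact hdet (f k) (hfle k hk)
    obtain ⟨m', g', hg0, hgle, hgmono, hesc, hredu⟩ := IH m hmn (fun k => s (f k)) h'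
    refine ⟨m', fun k => f (g' k), ?_, ?_, ?_, hesc, hredu⟩
    · show f (g' 0) = 0
      rw [hg0]; simp only [hf]; split <;> omega
    · intro k hk
      exact hfle (g' k) (hgle k hk)
    · intro a ha b hb hab
      exact hfmono (hgmono ha hb hab)
  · -- Case A: some earlier term already maps to []
    push_neg at hred
    obtain ⟨i, hin, hTi⟩ := hred
    have h' : P.IsEscape i s σ := by
      refine ⟨h0, ?_, ?_, ?_, hTi, ?_⟩
      · intro k h1 hk; exact hlen k h1 (hk.trans hin.le)
      · intro k hk; exact hpre k (hk.trans hin)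
      · intro k hk; exact hblk k (hk.trans hin)
      · intro k hk; exact hdet k (hk.trans hin.le)
    obtain ⟨m', g', hg0, hgle, hgmono, hesc, hredu⟩ := IH i hin s h'
    exact ⟨m', g', hg0, fun k hk => (hgle k hk).trans hin.le, hgmono, hesc, hredu⟩
end

section
/- Control of Cesàro averages of a small nonnegative function: let (X, μ) be a probability space, T : X → X measure preserving, h ≥ 0 measurable with ∫ h dμ < ε, and δ > 0. Then there exist n ∈ ℕ and a measurable set A with μ(A) < 4ε/δ such that for every x ∉ A and every n' ≥ n, (1/(n'+1))·Σ_{j=0}^{n'} h(T^j x) < δ. -/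
open MeasureTheory Filter
open scoped ENNReal NNReal

/-- The Birkhoff average `(1/(m+1)) Σ_{j=0}^{m} f(T^j x)`. -/
noncomputable def birkAvg {X : Type*} (T : X → X) (f : X → ℝ) (x : X) (m : ℕ) : ℝ :=
  (∑ j ∈ Finset.range (m + 1), f (T^[j] x)) / (m + 1)

/-- `u 0 < v 0 < u 1 < v 1 < ⋯ < u (N-1) < v (N-1)` is an upcrossing sequence of
length `N` for `α, β` for the Birkhoff averages of `f` at `x`. -/
def Upcross {X : Type*} (T : X → X) (f : X → ℝ) (α β : ℝ) (x : X) (N : ℕ)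
    (u v : ℕ → ℕ) : Prop :=
  (∀ i < N, u i < v i) ∧ (∀ i, i + 1 < N → v i < u (i + 1)) ∧
  (∀ i < N, birkAvg T f x (u i) < α) ∧ (∀ i < N, β < birkAvg T f x (v i))

/-- A loose upcrossing sequence of length `N` for `α, β, f, h` at `x`. -/
def LooseUpcross {X : Type*} (T : X → X) (f h : X → ℝ) (α β : ℝ) (x : X) (N : ℕ)
    (u v : ℕ → ℕ) : Prop :=
  (∀ i < N, u i < v i) ∧ (∀ i, i + 1 < N → v i < u (i + 1)) ∧
  (∀ i < N, birkAvg T f x (u i) < α) ∧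
  (∀ i < N, β < birkAvg T (fun y => f y + h y) x (v i))

/-- `τ(x, f, α, β)`: the supremum of lengths of upcrossing sequences. -/
noncomputable def upcrossCount {X : Type*} (T : X → X) (f : X → ℝ) (α β : ℝ)
    (x : X) : ℝ≥0∞ :=
  ⨆ N ∈ {N : ℕ | ∃ u v : ℕ → ℕ, Upcross T f α β x N u v}, (N : ℝ≥0∞)

/-- `υ(x, f, h, α, β)`: the supremum of lengths of loose upcrossing sequences. -/
noncomputable def looseCount {X : Type*} (T : X → X) (f h : X → ℝ) (α β : ℝ)
    (x : X) : ℝ≥0∞ :=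
  ⨆ N ∈ {N : ℕ | ∃ u v : ℕ → ℕ, LooseUpcross T f h α β x N u v}, (N : ℝ≥0∞)

section Garsia

set_option linter.unusedSectionVars false
set_option linter.unusedVariables false

variable {X : Type*} [MeasurableSpace X]

/-- `maxS T g N x = max_{0 ≤ k ≤ N} (birkhoffSum T g k x)` (recursively). -/
noncomputable def maxS (T : X → X) (g : X → ℝ) : ℕ → X → ℝ
  | 0 => fun _ => 0
  | (N + 1) => fun x => max (maxS T g N x) (birkhoffSum T g (N + 1) x)

lemma maxS_nonneg (T : X → X) (g : X → ℝ) : ∀ N x, 0 ≤ maxS T g N x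
  | 0, x => le_refl 0
  | (N + 1), x => le_trans (maxS_nonneg T g N x) (le_max_left _ _)

lemma maxS_mono (T : X → X) (g : X → ℝ) {N M : ℕ} (hNM : N ≤ M) (x : X) :
    maxS T g N x ≤ maxS T g M x := by
  induction M with
  | zero => simp_all [Nat.le_zero.mp hNM, le_refl]
  | succ M ih =>
    rcases Nat.lt_or_ge N (M + 1) with hlt | hge
    · exact le_trans (ih (Nat.lt_succ_iff.mp hlt)) (le_max_left _ _)
    · have : N = M + 1 := le_antisymm hNM hge
      subst this; rfl

lemma birkhoffSum_le_maxS (T : X → X) (g : X → ℝ) :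
    ∀ (N : ℕ) {k : ℕ}, k ≤ N → ∀ x, birkhoffSum T g k x ≤ maxS T g N x
  | 0, k, hk, x => by
    simp [Nat.le_zero.mp hk, birkhoffSum_zero, maxS]
  | (N + 1), k, hk, x => by
    rcases Nat.lt_succ_iff_lt_or_eq.mp (Nat.lt_succ_of_le hk) with hlt | rfl
    · exact le_trans (birkhoffSum_le_maxS T g N (Nat.lt_succ_iff.mp hlt) x) (le_max_left _ _)
    · exact le_max_right _ _

lemma maxS_key (T : X → X) (g : X → ℝ) : ∀ (N : ℕ) (x : X),
    maxS T g N x ≤ max 0 (g x + maxS T g N (T x))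
  | 0, x => le_max_left _ _
  | (N + 1), x => by
    refine max_le ?_ ?_
    · exact le_trans (maxS_key T g N x)
        (max_le_max le_rfl (add_le_add_right (maxS_mono T g (Nat.le_succ N) (T x)) _))
    · rw [birkhoffSum_succ']
      exact le_trans (add_le_add_right (birkhoffSum_le_maxS T g (N + 1) (Nat.le_succ N) (T x)) _)
        (le_max_right _ _)

lemma measurable_birkhoffSum {T : X → X} (hTm : Measurable T) {g : X → ℝ}
    (hg : Measurable g) (k : ℕ) : Measurable (birkhoffSum T g k) := by
  unfold birkhoffSum
  exact Finset.measurable_sum _ fun j _ => hg.comp (hTm.iterate j)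

lemma measurable_maxS {T : X → X} (hTm : Measurable T) {g : X → ℝ}
    (hg : Measurable g) : ∀ N, Measurable (maxS T g N)
  | 0 => measurable_const
  | (N + 1) => (measurable_maxS hTm hg N).max (measurable_birkhoffSum hTm hg (N + 1))

lemma integrable_birkhoffSum {μ : Measure X} {T : X → X} (hT : MeasurePreserving T μ μ)
    {g : X → ℝ} (hgi : Integrable g μ) (k : ℕ) : Integrable (birkhoffSum T g k) μ := by
  unfold birkhoffSum
  apply integrable_finset_sum
  intro j _
  exact ((hT.iterate j).integrable_comp hgi.aestronglyMeasurable).mpr hgi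

lemma integrable_maxS {μ : Measure X} [IsFiniteMeasure μ] {T : X → X}
    (hT : MeasurePreserving T μ μ) {g : X → ℝ} (hgi : Integrable g μ) :
    ∀ N, Integrable (maxS T g N) μ
  | 0 => integrable_const 0
  | (N + 1) => (integrable_maxS hT hgi N).sup (integrable_birkhoffSum hT hgi (N + 1))

/-- Garsia's maximal ergodic lemma. -/
lemma garsia {μ : Measure X} [IsProbabilityMeasure μ] {T : X → X}
    (hT : MeasurePreserving T μ μ) {g : X → ℝ} (hg : Measurable g)
    (hgi : Integrable g μ) (N : ℕ) :
    0 ≤ ∫ x in {x | 0 < maxS T g N x}, g x ∂μ := by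
  set E : Set X := {x | 0 < maxS T g N x} with hE
  have hEm : MeasurableSet E := measurableSet_lt measurable_const (measurable_maxS hT.measurable hg N)
  have hΦi : Integrable (maxS T g N) μ := integrable_maxS hT hgi N
  have hΦTi : Integrable (fun x => maxS T g N (T x)) μ :=
    (hT.integrable_comp hΦi.aestronglyMeasurable).mpr hΦi
  have hpt : ∀ x ∈ E, maxS T g N x - maxS T g N (T x) ≤ g x := by
    intro x hx
    have := maxS_key T g N x
    rcases le_max_iff.mp this with h0 | hc
    · exact absurd hx (by simp [hE, not_lt.mpr h0])
    · linarith
  have h1 : ∫ x in E, (maxS T g N x - maxS T g N (T x)) ∂μ ≤ ∫ x in E, g x ∂μ :=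
    setIntegral_mono_on (hΦi.sub hΦTi).integrableOn hgi.integrableOn hEm hpt
  have h2 : ∫ x in E, maxS T g N x ∂μ = ∫ x, maxS T g N x ∂μ := by
    rw [← integral_add_compl hEm hΦi]
    have hz : ∫ x in Eᶜ, maxS T g N x ∂μ = 0 := by
      have : ∀ x ∈ Eᶜ, maxS T g N x = (0 : ℝ) := fun x hx =>
        le_antisymm (not_lt.mp hx) (maxS_nonneg T g N x)
      rw [setIntegral_congr_fun hEm.compl this, integral_zero]
    rw [hz, add_zero]
  have h3 : ∫ x in E, maxS T g N (T x) ∂μ ≤ ∫ x, maxS T g N (T x) ∂μ :=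
    setIntegral_le_integral hΦTi
      (Filter.Eventually.of_forall fun x => maxS_nonneg T g N (T x))
  have h4 : ∫ x, maxS T g N (T x) ∂μ = ∫ x, maxS T g N x ∂μ := by
    have hm : AEStronglyMeasurable (maxS T g N) (Measure.map T μ) :=
      hT.map_eq.symm ▸ hΦi.aestronglyMeasurable
    have := MeasureTheory.integral_map hT.measurable.aemeasurable hm
    rw [hT.map_eq] at this
    exact this.symm
  have h5 : ∫ x in E, (maxS T g N x - maxS T g N (T x)) ∂μ
      = ∫ x in E, maxS T g N x ∂μ - ∫ x in E, maxS T g N (T x) ∂μ :=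
    integral_sub hΦi.integrableOn hΦTi.integrableOn
  linarith

end Garsia

theorem stmt_8' {X : Type*} [MeasurableSpace X] (μ : Measure X) [IsProbabilityMeasure μ]
    (T : X → X) (hT : MeasurePreserving T μ μ)
    (h : X → ℝ) (hmeas : Measurable h) (hint : Integrable h μ)
    (hpos : ∀ x, 0 ≤ h x) (ε δ : ℝ) (hδ : 0 < δ)
    (hε : ∫ x, h x ∂μ < ε) :
    ∃ (n : ℕ) (A : Set X), MeasurableSet A ∧ μ A < ENNReal.ofReal (4 * ε / δ) ∧
      ∀ x ∉ A, ∀ n' ≥ n, (∑ j ∈ Finset.range (n' + 1), h (T^[j] x)) / (n' + 1) < δ := by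
  set g : X → ℝ := fun x => h x - δ / 2 with hg
  have hgm : Measurable g := hmeas.sub measurable_const
  have hgi : Integrable g μ := hint.sub (integrable_const _)
  set I : ℝ := ∫ x, h x ∂μ with hI
  have hI0 : 0 ≤ I := integral_nonneg hpos
  have hε0 : 0 < ε := lt_of_le_of_lt hI0 hε
  set E : ℕ → Set X := fun N => {x | 0 < maxS T g N x} with hEdef
  have hEm : ∀ N, MeasurableSet (E N) := fun N =>
    measurableSet_lt measurable_const (measurable_maxS hT.measurable hgm N)
  set A : Set X := ⋃ N, E N with hA
  have hAm : MeasurableSet A := MeasurableSet.iUnion hEm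
  -- measure bound on each E N
  have hENbound : ∀ N, μ (E N) ≤ ENNReal.ofReal (2 * I / δ) := by
    intro N
    have hgar := garsia hT hgm hgi N
    have hsplit : ∫ x in E N, g x ∂μ
        = ∫ x in E N, h x ∂μ - (δ / 2) * (μ (E N)).toReal := by
      rw [hg]
      rw [integral_sub hint.integrableOn (integrable_const _).integrableOn]
      rw [setIntegral_const]
      simp [mul_comm, Measure.restrict_apply_univ, measureReal_def]
    have hle : ∫ x in E N, h x ∂μ ≤ I :=
      setIntegral_le_integral hint (Filter.Eventually.of_forall hpos)
    have htoReal : (δ / 2) * (μ (E N)).toReal ≤ I := by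
      rw [hsplit] at hgar; linarith
    have hfin : μ (E N) ≠ ⊤ := measure_ne_top μ _
    have : (μ (E N)).toReal ≤ 2 * I / δ := by
      rw [le_div_iff₀ hδ]; nlinarith [ENNReal.toReal_nonneg (a := μ (E N))]
    calc μ (E N) = ENNReal.ofReal (μ (E N)).toReal := (ENNReal.ofReal_toReal hfin).symm
      _ ≤ ENNReal.ofReal (2 * I / δ) := ENNReal.ofReal_le_ofReal this
  have hEmono : Monotone E := by
    intro N M hNM x hx
    exact lt_of_lt_of_le hx (maxS_mono T g hNM x)
  have hμA : μ A = ⨆ N, μ (E N) := by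
    rw [hA]
    exact Directed.measure_iUnion hEmono.directed_le
  have hAbound : μ A < ENNReal.ofReal (4 * ε / δ) := by
    rw [hμA]
    refine lt_of_le_of_lt (iSup_le hENbound) ?_
    rw [ENNReal.ofReal_lt_ofReal_iff (by positivity)]
    rw [div_lt_div_iff_of_pos_right hδ]
    linarith
  refine ⟨0, A, hAm, hAbound, ?_⟩
  intro x hxA n' _
  have hn : (0 : ℝ) < (n' : ℝ) + 1 := by positivity
  have h2 : maxS T g (n' + 1) x ≤ 0 :=
    not_lt.mp fun hc => hxA (Set.mem_iUnion.mpr ⟨n' + 1, hc⟩)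
  have h1 : birkhoffSum T g (n' + 1) x ≤ 0 :=
    le_trans (birkhoffSum_le_maxS T g (n' + 1) le_rfl x) h2
  have heq : birkhoffSum T g (n' + 1) x
      = (∑ j ∈ Finset.range (n' + 1), h (T^[j] x)) - ((n' : ℝ) + 1) * (δ / 2) := by
    simp only [birkhoffSum, hg, Finset.sum_sub_distrib, Finset.sum_const, Finset.card_range,
      nsmul_eq_mul]
    push_cast
    ring
  have hsum : ∑ j ∈ Finset.range (n' + 1), h (T^[j] x) ≤ ((n' : ℝ) + 1) * (δ / 2) := by
    linarith [heq ▸ h1]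
  rw [div_lt_iff₀ hn]
  nlinarith

/-- if `h ≥ 0` with `∫ h dμ < ε` and `δ > 0`, then there are `n` and a set
`A` with `μ(A) < 4ε/δ` such that all Cesàro averages of `h` at times `≥ n` are `< δ`
outside `A`. -/
theorem stmt_8 {X : Type*} [MeasurableSpace X] (μ : Measure X) [IsProbabilityMeasure μ]
    (T : X → X) (hT : MeasurePreserving T μ μ)
    (h : X → ℝ) (hmeas : Measurable h) (hint : Integrable h μ)
    (hpos : ∀ x, 0 ≤ h x) (ε δ : ℝ) (hδ : 0 < δ)
    (hε : ∫ x, h x ∂μ < ε) :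
    ∃ (n : ℕ) (A : Set X), MeasurableSet A ∧ μ A < ENNReal.ofReal (4 * ε / δ) ∧
      ∀ x ∉ A, ∀ n' ≥ n, birkAvg T h x n' < δ := by
  obtain ⟨n, A, hAm, hAb, hav⟩ := stmt_8' μ T hT h hmeas hint hpos ε δ hδ hε
  exact ⟨n, A, hAm, hAb, fun x hx n' hn' => by simpa [birkAvg] using hav x hx n' hn'⟩
end

section
/- A loose upcrossing sequence starting late is a genuine upcrossing sequence: suppose x is such that (1/(n'+1))Σ_{j=0}^{n'} h(T^j x) ≤ δ for all n' ≥ n, where h ≥ 0. Then any loose upcrossing sequence n ≤ u₁ < v₁ < ⋯ < u_N < v_N for α, β, f, h (with β − α > δ) is an upcrossing sequence for α, β − δ and f. -/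
open MeasureTheory Filter
open scoped ENNReal NNReal

/-- if the Cesàro averages of `h ≥ 0` at `x` are `≤ δ` from time `n` on,
then any loose upcrossing sequence for `α, β, f, h` starting at time `≥ n` (with
`β − α > δ`) is an upcrossing sequence for `α, β − δ` and `f`. -/
theorem stmt_9 {X : Type*} (T : X → X) (f h : X → ℝ) (hpos : ∀ y, 0 ≤ h y)
    (x : X) (n : ℕ) (δ : ℝ)
    (hbound : ∀ n' ≥ n, birkAvg T h x n' ≤ δ)
    (α β : ℝ) (hαβ : δ < β - α)
    (N : ℕ) (u v : ℕ → ℕ) (hstart : 0 < N → n ≤ u 0)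
    (hl : LooseUpcross T f h α β x N u v) :
    Upcross T f α (β - δ) x N u v := by
  obtain ⟨huv, hvu, hu, hv⟩ := hl
  have hadd : ∀ m : ℕ, birkAvg T (fun y => f y + h y) x m
      = birkAvg T f x m + birkAvg T h x m := by
    intro m
    simp [birkAvg, Finset.sum_add_distrib, add_div]
  have hui : ∀ i < N, n ≤ u i := by
    intro i
    induction i with
    | zero => intro hi; exact hstart hi
    | succ k ih =>
      intro hk
      have hk' : k < N := Nat.lt_of_succ_lt hk
      have := ih hk'
      have h1 : u k < v k := huv k hk'
      have h2 : v k < u (k + 1) := hvu k hk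
      omega
  refine ⟨huv, hvu, hu, ?_⟩
  intro i hi
  have hvn : n ≤ v i := le_trans (hui i hi) (le_of_lt (huv i hi))
  have hb := hbound (v i) hvn
  have hvi := hv i hi
  rw [hadd (v i)] at hvi
  linarith
end

section
/- Bounded integral of loose upcrossing counts: let (X, μ) be a probability space, T measure preserving, f integrable, h ≥ 0 with ∫ h dμ < ε, and rationals α < β with β − α > δ > 0. Then there is a measurable set A with μ(A) < 4ε/δ such that ∫_{X∖A} υ(x, f, h, α, β) dμ(x) < ∞, where υ(x, f, h, α, β) is the supremum of lengths of loose upcrossing sequences for α, β, f, h at x. -/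
open MeasureTheory Filter
open scoped ENNReal NNReal

namespace Stmt10Aux

variable {X : Type*} [MeasurableSpace X] {μ : Measure X} {T : X → X}

/-- running maximum `max_{0 ≤ k ≤ n} S_k` of partial Birkhoff sums (with `S_0 = 0`). -/
noncomputable def mx (T : X → X) (g : X → ℝ) : ℕ → X → ℝ
  | 0 => fun _ => 0
  | n + 1 => fun x => max (mx T g n x) (∑ j ∈ Finset.range (n + 1), g (T^[j] x))

lemma mx_succ_def (g : X → ℝ) (n : ℕ) (x : X) :
    mx T g (n + 1) x = max (mx T g n x) (∑ j ∈ Finset.range (n + 1), g (T^[j] x)) := rfl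

lemma mx_nonneg (g : X → ℝ) (n : ℕ) (x : X) : 0 ≤ mx T g n x := by
  induction n with
  | zero => exact le_refl _
  | succ n ih => exact le_trans ih (le_max_left _ _)

lemma mx_mono (g : X → ℝ) (x : X) : Monotone fun n => mx T g n x :=
  monotone_nat_of_le_succ fun n => le_max_left _ _

lemma sum_shift (g : X → ℝ) (x : X) (n : ℕ) :
    ∑ j ∈ Finset.range (n + 1), g (T^[j] x) = g x + ∑ j ∈ Finset.range n, g (T^[j] (T x)) := by
  rw [Finset.sum_range_succ']
  simp [Function.iterate_succ_apply, add_comm]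

lemma mx_succ (g : X → ℝ) (n : ℕ) (x : X) :
    mx T g (n + 1) x = max 0 (g x + mx T g n (T x)) := by
  induction n generalizing x with
  | zero =>
      simp [mx, Finset.sum_range_one]
  | succ n ih =>
      rw [mx_succ_def, ih, sum_shift g x (n + 1), max_assoc, max_add_add_left,
        ← mx_succ_def]

lemma mx_measurable (hT : Measurable T) {g : X → ℝ} (hg : Measurable g) (n : ℕ) :
    Measurable (mx T g n) := by
  induction n with
  | zero => exact measurable_const
  | succ n ih =>
      exact ih.max (Finset.measurable_sum _ fun j _ => hg.comp (hT.iterate j))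

lemma mx_integrable (hT : MeasurePreserving T μ μ) {g : X → ℝ}
    (hgi : Integrable g μ) (n : ℕ) : Integrable (mx T g n) μ := by
  induction n with
  | zero => exact integrable_zero X ℝ μ
  | succ n ih =>
      have hsum : Integrable (fun x => ∑ j ∈ Finset.range (n + 1), g (T^[j] x)) μ := by
        refine integrable_finset_sum _ fun j _ => ?_
        exact ((hT.iterate j).integrable_comp hgi.aestronglyMeasurable).2 hgi
      exact ih.sup hsum

lemma mx_pos_exists {g : X → ℝ} {x : X} :
    ∀ {n}, 0 < mx T g n x → ∃ m, 0 < ∑ j ∈ Finset.range (m + 1), g (T^[j] x)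
  | 0, h => absurd h (by simp [mx])
  | n + 1, h => by
      rcases lt_max_iff.1 h with h' | h'
      · exact mx_pos_exists h'
      · exact ⟨n, h'⟩

lemma mx_pos_eq {g : X → ℝ} {x : X} {n : ℕ} (h : 0 < mx T g (n + 1) x) :
    g x = mx T g (n + 1) x - mx T g n (T x) := by
  have h1 := mx_succ (T := T) g n x
  have h2 : 0 < g x + mx T g n (T x) := by
    rcases lt_max_iff.1 (h1 ▸ h) with h' | h'
    · exact absurd h' (lt_irrefl _)
    · exact h'
  rw [h1, max_eq_right h2.le]
  ring

def crossSet (T : X → X) (g : X → ℝ) : Set X :=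
  {x | ∃ m, 0 < ∑ j ∈ Finset.range (m + 1), g (T^[j] x)}

lemma crossSet_measurable (hT : Measurable T) {g : X → ℝ} (hg : Measurable g) :
    MeasurableSet (crossSet T g) := by
  have : crossSet T g = ⋃ m, {x | 0 < ∑ j ∈ Finset.range (m + 1), g (T^[j] x)} := by
    ext x; simp [crossSet]
  rw [this]
  exact MeasurableSet.iUnion fun m =>
    measurableSet_lt measurable_const (Finset.measurable_sum _ fun j _ => hg.comp (hT.iterate j))

/-- Maximal ergodic theorem (Garsia), relative to an almost invariant set `D`. -/
lemma maxErg (hT : MeasurePreserving T μ μ) {g : X → ℝ} (hg : Measurable g)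
    (hgi : Integrable g μ) {D : Set X} (hD : MeasurableSet D) (hDT : D ⊆ T ⁻¹' D) :
    0 ≤ ∫ x in D ∩ crossSet T g, g x ∂μ := by
  have hTm := hT.measurable
  have hmx := fun n => mx_measurable hTm hg n
  have hmxi := fun n => mx_integrable hT hgi n
  set s : ℕ → Set X := fun n => D ∩ {x | 0 < mx T g (n + 1) x} with hs
  have hsm : ∀ n, MeasurableSet (s n) := fun n =>
    hD.inter (measurableSet_lt measurable_const (hmx (n + 1)))
  have hmono : Monotone s := by
    intro a b hab x hx
    exact ⟨hx.1, lt_of_lt_of_le hx.2 (mx_mono g x (by omega))⟩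
  have hUnion : ⋃ n, s n = D ∩ crossSet T g := by
    ext x
    constructor
    · intro hx
      obtain ⟨n, hx⟩ := Set.mem_iUnion.1 hx
      exact ⟨hx.1, mx_pos_exists hx.2⟩
    · rintro ⟨hxD, m, hm⟩
      exact Set.mem_iUnion.2 ⟨m, hxD, lt_of_lt_of_le hm (le_max_right _ _)⟩
  have key : ∀ n, 0 ≤ ∫ x in s n, g x ∂μ := by
    intro n
    have hcompInt : Integrable (fun x => mx T g n (T x)) μ :=
      (hT.integrable_comp (hmx n).aestronglyMeasurable).2 (hmxi n)
    have h1 : ∫ x in s n, g x ∂μ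
        = ∫ x in s n, (mx T g (n + 1) x - mx T g n (T x)) ∂μ :=
      setIntegral_congr_fun (hsm n) fun x hx => mx_pos_eq hx.2
    have h2 : ∫ x in s n, (mx T g (n + 1) x - mx T g n (T x)) ∂μ
        = ∫ x in s n, mx T g (n + 1) x ∂μ - ∫ x in s n, mx T g n (T x) ∂μ :=
      integral_sub (hmxi (n + 1)).integrableOn hcompInt.integrableOn
    have h3 : ∫ x in s n, mx T g (n + 1) x ∂μ = ∫ x in D, mx T g (n + 1) x ∂μ := by
      have hU : MeasurableSet {x : X | 0 < mx T g (n + 1) x} :=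
        measurableSet_lt measurable_const (hmx (n + 1))
      have hsplit := integral_inter_add_diff (μ := μ) (s := D)
        (t := {x : X | 0 < mx T g (n + 1) x}) (f := mx T g (n + 1)) hU
        (hmxi (n + 1)).integrableOn
      have hzero : ∫ x in D \ {x : X | 0 < mx T g (n + 1) x}, mx T g (n + 1) x ∂μ = 0 := by
        have heq : Set.EqOn (mx T g (n + 1)) (fun _ => (0 : ℝ))
            (D \ {x : X | 0 < mx T g (n + 1) x}) := fun x hx =>
          le_antisymm (not_lt.1 hx.2) (mx_nonneg g (n + 1) x)
        rw [setIntegral_congr_fun (hD.diff hU) heq]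
        simp
      rw [← hsplit, hzero, add_zero]
    have h4 : ∫ x in s n, mx T g n (T x) ∂μ ≤ ∫ x in T ⁻¹' D, mx T g n (T x) ∂μ :=
      setIntegral_mono_set hcompInt.integrableOn
        (Filter.Eventually.of_forall fun x => mx_nonneg _ _ _)
        (HasSubset.Subset.eventuallyLE fun x hx => hDT hx.1)
    have h5 : ∫ x in T ⁻¹' D, mx T g n (T x) ∂μ = ∫ x in D, mx T g n x ∂μ := by
      have hind : ∀ x, (T ⁻¹' D).indicator (fun y => mx T g n (T y)) x
          = D.indicator (mx T g n) (T x) := by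
        intro x
        by_cases hx : T x ∈ D <;> simp [Set.indicator, hx, Set.mem_preimage]
      have hmeas : AEStronglyMeasurable (D.indicator (mx T g n)) (Measure.map T μ) := by
        rw [hT.map_eq]; exact ((hmx n).indicator hD).aestronglyMeasurable
      calc ∫ x in T ⁻¹' D, mx T g n (T x) ∂μ
          = ∫ x, (T ⁻¹' D).indicator (fun y => mx T g n (T y)) x ∂μ :=
            (integral_indicator (hTm hD)).symm
        _ = ∫ x, D.indicator (mx T g n) (T x) ∂μ := by simp only [hind]
        _ = ∫ y, D.indicator (mx T g n) y ∂μ := by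
            rw [← integral_map hTm.aemeasurable hmeas, hT.map_eq]
        _ = ∫ x in D, mx T g n x ∂μ := integral_indicator hD
    have h6 : ∫ x in D, mx T g n x ∂μ ≤ ∫ x in D, mx T g (n + 1) x ∂μ :=
      setIntegral_mono (hmxi n).integrableOn (hmxi (n + 1)).integrableOn
        fun x => mx_mono g x (Nat.le_succ n)
    rw [h1, h2, h3]
    linarith
  have hlim := tendsto_setIntegral_of_monotone hsm hmono hgi.integrableOn
  rw [hUnion] at hlim
  exact ge_of_tendsto' hlim key



lemma birkAvg_measurable (hT : Measurable T) {g : X → ℝ} (hg : Measurable g) (m : ℕ) :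
    Measurable fun x => birkAvg T g x m :=
  (Finset.measurable_sum _ fun j _ => hg.comp (hT.iterate j)).div_const _

lemma birkAvg_add (f h : X → ℝ) (x : X) (m : ℕ) :
    birkAvg T (fun y => f y + h y) x m = birkAvg T f x m + birkAvg T h x m := by
  simp [birkAvg, Finset.sum_add_distrib, add_div]

lemma birkAvg_neg (g : X → ℝ) (x : X) (m : ℕ) :
    birkAvg T (fun y => -(g y)) x m = -birkAvg T g x m := by
  simp [birkAvg, neg_div]

/-- averages are frequently below `a`. -/
def FreqLt (T : X → X) (g : X → ℝ) (x : X) (a : ℝ) : Prop :=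
  ∀ k : ℕ, ∃ m, k ≤ m ∧ birkAvg T g x m < a

/-- averages are frequently above `b`. -/
def FreqGt (T : X → X) (g : X → ℝ) (x : X) (b : ℝ) : Prop :=
  ∀ k : ℕ, ∃ m, k ≤ m ∧ b < birkAvg T g x m

lemma freqGt_iff_freqLt_neg {g : X → ℝ} {x : X} {b : ℝ} :
    FreqGt T g x b ↔ FreqLt T (fun y => -(g y)) x (-b) := by
  unfold FreqGt FreqLt
  constructor <;> intro hx k <;> obtain ⟨m, hk, hm⟩ := hx k <;> refine ⟨m, hk, ?_⟩ <;>
    simp only [birkAvg_neg] at * <;> linarith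

lemma FreqLt.shift {g : X → ℝ} {x : X} {a a' : ℝ} (haa : a < a') (hx : FreqLt T g x a) :
    FreqLt T g (T x) a' := by
  intro k
  obtain ⟨K, hK⟩ : ∃ K : ℕ, |a - g x| / (a' - a) < K := exists_nat_gt _
  obtain ⟨m, hm, hlt⟩ := hx (max (k + 1) (K + 1))
  obtain ⟨m', rfl⟩ : ∃ m', m = m' + 1 := ⟨m - 1, by omega⟩
  have hm1 : k ≤ m' := by
    have := le_trans (le_max_left (k + 1) (K + 1)) hm; omega
  have hKm : (K : ℝ) ≤ (m' : ℝ) + 1 := by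
    have : K ≤ m' + 1 := by have := le_trans (le_max_right (k + 1) (K + 1)) hm; omega
    exact_mod_cast this
  refine ⟨m', hm1, ?_⟩
  have hp1 : (0 : ℝ) < (m' : ℝ) + 1 := by positivity
  have hp2 : (0 : ℝ) < (m' : ℝ) + 1 + 1 := by positivity
  have hd : (0 : ℝ) < a' - a := sub_pos.2 haa
  have hK' : |a - g x| < (a' - a) * K := by
    rwa [div_lt_iff₀ hd, mul_comm] at hK
  rw [birkAvg] at hlt
  push_cast at hlt
  rw [div_lt_iff₀ hp2] at hlt
  rw [sum_shift g x (m' + 1)] at hlt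
  rw [birkAvg, div_lt_iff₀ hp1]
  push_cast
  have habs : a - g x ≤ |a - g x| := le_abs_self _
  nlinarith [mul_le_mul_of_nonneg_left hKm hd.le]

lemma FreqLt.orbit {g : X → ℝ} {x : X} {a a' : ℝ} (haa : a < a') (hx : FreqLt T g x a) :
    ∀ j, FreqLt T g (T^[j] x) a' := by
  have hd : (0 : ℝ) < a' - a := sub_pos.2 haa
  have main : ∀ j, FreqLt T g (T^[j] x) (a' - (a' - a) / 2 ^ j) := by
    intro j
    induction j with
    | zero => simpa [sub_sub_cancel] using hx
    | succ j ih =>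
        rw [Function.iterate_succ_apply']
        refine ih.shift ?_
        have h2 : (a' - a) / 2 ^ (j + 1) < (a' - a) / 2 ^ j := by
          apply div_lt_div_of_pos_left hd (by positivity)
          exact pow_lt_pow_right₀ one_lt_two (Nat.lt_succ_self j)
        linarith
  intro j k
  obtain ⟨m, hk, hm⟩ := main j k
  refine ⟨m, hk, hm.trans_le ?_⟩
  have : (0 : ℝ) ≤ (a' - a) / 2 ^ j := by positivity
  linarith

lemma FreqGt.orbit {g : X → ℝ} {x : X} {b b' : ℝ} (hbb : b' < b) (hx : FreqGt T g x b) :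
    ∀ j, FreqGt T g (T^[j] x) b' := fun j =>
  freqGt_iff_freqLt_neg.2 ((freqGt_iff_freqLt_neg.1 hx).orbit (neg_lt_neg hbb) j)

def GSet (T : X → X) (f h : X → ℝ) (α β : ℝ) (N : ℕ) : Set X :=
  {x | ∃ u v : ℕ → ℕ, LooseUpcross T f h α β x N u v}

lemma GSet_anti {f h : X → ℝ} {α β : ℝ} {N N' : ℕ} (hNN : N ≤ N') :
    GSet T f h α β N' ⊆ GSet T f h α β N := by
  rintro x ⟨u, v, h1, h2, h3, h4⟩
  exact ⟨u, v, fun i hi => h1 i (lt_of_lt_of_le hi hNN),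
    fun i hi => h2 i (lt_of_lt_of_le hi hNN),
    fun i hi => h3 i (lt_of_lt_of_le hi hNN),
    fun i hi => h4 i (lt_of_lt_of_le hi hNN)⟩

lemma GSet_measurable (hT : Measurable T) {f h : X → ℝ} (hf : Measurable f)
    (hh : Measurable h) (α β : ℝ) (N : ℕ) : MeasurableSet (GSet T f h α β N) := by
  have key : GSet T f h α β N = ⋃ p : (Fin N → ℕ) × (Fin N → ℕ),
      {x | LooseUpcross T f h α β x N (fun i => if hi : i < N then p.1 ⟨i, hi⟩ else 0)
        (fun i => if hi : i < N then p.2 ⟨i, hi⟩ else 0)} := by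
    ext x
    constructor
    · rintro ⟨u, v, h1, h2, h3, h4⟩
      refine Set.mem_iUnion.2 ⟨(fun i => u i, fun i => v i), ?_, ?_, ?_, ?_⟩
      · intro i hi; simpa [hi] using h1 i hi
      · intro i hi
        have hi' : i < N := Nat.lt_of_succ_lt hi
        simpa [hi, hi'] using h2 i hi
      · intro i hi; simpa [hi] using h3 i hi
      · intro i hi; simpa [hi] using h4 i hi
    · intro hx
      obtain ⟨p, hp⟩ := Set.mem_iUnion.1 hx
      exact ⟨_, _, hp⟩
  rw [key]
  refine MeasurableSet.iUnion fun p => ?_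
  set uu : ℕ → ℕ := fun i => if hi : i < N then p.1 ⟨i, hi⟩ else 0
  set vv : ℕ → ℕ := fun i => if hi : i < N then p.2 ⟨i, hi⟩ else 0
  have : {x | LooseUpcross T f h α β x N uu vv} =
      ({_x : X | (∀ i < N, uu i < vv i) ∧ ∀ i, i + 1 < N → vv i < uu (i + 1)}) ∩
      ((⋂ i, ⋂ (_ : i < N), {x | birkAvg T f x (uu i) < α}) ∩
       (⋂ i, ⋂ (_ : i < N), {x | β < birkAvg T (fun y => f y + h y) x (vv i)})) := by
    ext x
    simp only [LooseUpcross, Set.mem_inter_iff, Set.mem_setOf_eq, Set.mem_iInter]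
    tauto
  rw [this]
  exact (MeasurableSet.const _).inter
    ((MeasurableSet.iInter fun i => MeasurableSet.iInter fun _ =>
        measurableSet_lt (birkAvg_measurable hT hf _) measurable_const).inter
     (MeasurableSet.iInter fun i => MeasurableSet.iInter fun _ =>
        measurableSet_lt measurable_const (birkAvg_measurable hT (hf.add hh) _)))

lemma looseCount_le {f h : X → ℝ} {α β : ℝ} {x : X} {M : ℕ}
    (hx : x ∉ GSet T f h α β (M + 1)) : looseCount T f h α β x ≤ M := by
  refine iSup₂_le fun N hN => ?_
  by_contra hc
  push_neg at hc
  have hMN : M + 1 ≤ N := by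
    have : (M : ℝ≥0∞) < N := hc
    exact_mod_cast Nat.succ_le_of_lt (by exact_mod_cast this)
  exact hx (GSet_anti hMN hN)

lemma freq_of_mem_GSet {f h : X → ℝ} {α β : ℝ} {x : X}
    (hx : ∀ N : ℕ, x ∈ GSet T f h α β (N + 1)) :
    FreqLt T f x α ∧ FreqGt T (fun y => f y + h y) x β := by
  have hui : ∀ k : ℕ, ∃ u v : ℕ → ℕ, LooseUpcross T f h α β x (k + 1) u v ∧ k ≤ u k := by
    intro k
    obtain ⟨u, v, h1, h2, h3, h4⟩ := hx k
    refine ⟨u, v, ⟨h1, h2, h3, h4⟩, ?_⟩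
    have : ∀ i, i < k + 1 → i ≤ u i := by
      intro i
      induction i with
      | zero => intro _; exact Nat.zero_le _
      | succ i ih =>
          intro hi
          have hi' : i < k + 1 := Nat.lt_of_succ_lt hi
          have hu := h1 i hi'
          have hv := h2 i hi
          have := ih hi'
          omega
    exact this k (Nat.lt_succ_self k)
  constructor
  · intro k
    obtain ⟨u, v, ⟨h1, h2, h3, h4⟩, hk⟩ := hui k
    exact ⟨u k, hk, h3 k (Nat.lt_succ_self k)⟩
  · intro k
    obtain ⟨u, v, ⟨h1, h2, h3, h4⟩, hk⟩ := hui k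
    exact ⟨v k, le_trans hk (h1 k (Nat.lt_succ_self k)).le, h4 k (Nat.lt_succ_self k)⟩

end Stmt10Aux

open Stmt10Aux

/-- under `∫ h dμ < ε`, `h ≥ 0`, `β − α > δ > 0`, there is a set `A` with
`μ(A) < 4ε/δ` such that the integral of the loose upcrossing count `υ(x, f, h, α, β)`
over `X ∖ A` is finite. -/
theorem stmt_10 {X : Type*} [MeasurableSpace X] (μ : Measure X) [IsProbabilityMeasure μ]
    (T : X → X) (hT : MeasurePreserving T μ μ)
    (f h : X → ℝ) (hf : Integrable f μ) (hh : Integrable h μ)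
    (hpos : ∀ x, 0 ≤ h x) (ε δ : ℝ) (hδ : 0 < δ)
    (hε : ∫ x, h x ∂μ < ε)
    (α β : ℚ) (hαβ : α < β) (hδ' : δ < (β : ℝ) - α) :
    ∃ A : Set X, MeasurableSet A ∧ μ A < ENNReal.ofReal (4 * ε / δ) ∧
      ∫⁻ x in Aᶜ, looseCount T f h α β x ∂μ < ⊤ := by
  classical
  have hTm := hT.measurable
  -- measurable modifications of f and h
  set f₁ : X → ℝ := hf.1.mk f with hf₁def
  have hf₁m : Measurable f₁ := hf.1.stronglyMeasurable_mk.measurable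
  have hff₁ : f =ᵐ[μ] f₁ := hf.1.ae_eq_mk
  set h₁ : X → ℝ := fun x => max (hh.1.mk h x) 0 with hh₁def
  have hh₁m : Measurable h₁ := hh.1.stronglyMeasurable_mk.measurable.max measurable_const
  have hhh₁ : h =ᵐ[μ] h₁ := by
    refine hh.1.ae_eq_mk.mono fun x hx => ?_
    simp only [hh₁def, ← hx]
    exact (max_eq_left (hpos x)).symm
  have hh₁pos : ∀ x, 0 ≤ h₁ x := fun x => le_max_right _ _
  have hf₁i : Integrable f₁ μ := hf.congr hff₁
  have hh₁i : Integrable h₁ μ := hh.congr hhh₁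
  have hεpos : 0 < ε := lt_of_le_of_lt (integral_nonneg hpos) hε
  have hint : ∫ x, h₁ x ∂μ = ∫ x, h x ∂μ := (integral_congr_ae hhh₁).symm
  -- the set where some Birkhoff average of h₁ exceeds δ/4
  set g₀ : X → ℝ := fun x => h₁ x - δ / 4 with hg₀def
  have hg₀m : Measurable g₀ := hh₁m.sub measurable_const
  have hg₀i : Integrable g₀ μ := hh₁i.sub (integrable_const _)
  set A₁ : Set X := crossSet T g₀ with hA₁def
  have hA₁m : MeasurableSet A₁ := crossSet_measurable hTm hg₀m
  have hmax : 0 ≤ ∫ x in A₁, g₀ x ∂μ := by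
    have := maxErg hT hg₀m hg₀i MeasurableSet.univ (fun x _ => trivial)
    rwa [Set.univ_inter] at this
  have hA₁small : μ A₁ < ENNReal.ofReal (4 * ε / δ) := by
    have h1 : ∫ x in A₁, g₀ x ∂μ = ∫ x in A₁, h₁ x ∂μ - (μ A₁).toReal * (δ / 4) := by
      simp only [hg₀def]
      rw [integral_sub hh₁i.integrableOn (integrable_const _).integrableOn,
        setIntegral_const, smul_eq_mul, measureReal_def]
    have h3 : ∫ x in A₁, h₁ x ∂μ ≤ ∫ x, h₁ x ∂μ :=
      setIntegral_le_integral hh₁i (Filter.Eventually.of_forall hh₁pos)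
    have h4 : (μ A₁).toReal < 4 * ε / δ := by
      rw [lt_div_iff₀ hδ]
      rw [hint] at h3
      nlinarith [hmax, h1, h3, hε]
    calc μ A₁ = ENNReal.ofReal (μ A₁).toReal := (ENNReal.ofReal_toReal (measure_ne_top μ _)).symm
      _ < ENNReal.ofReal (4 * ε / δ) :=
          (ENNReal.ofReal_lt_ofReal_iff (div_pos (by linarith) hδ)).2 h4
  have hA₁c : ∀ x ∉ A₁, ∀ m : ℕ, birkAvg T h₁ x m ≤ δ / 4 := by
    intro x hx m
    by_contra hc
    push_neg at hc
    apply hx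
    refine ⟨m, ?_⟩
    have hp : (0 : ℝ) < (m : ℝ) + 1 := by positivity
    rw [birkAvg, lt_div_iff₀ hp] at hc
    have hsum : ∑ j ∈ Finset.range (m + 1), g₀ (T^[j] x)
        = (∑ j ∈ Finset.range (m + 1), h₁ (T^[j] x)) - ((m : ℝ) + 1) * (δ / 4) := by
      simp only [hg₀def]
      rw [Finset.sum_sub_distrib, Finset.sum_const, Finset.card_range]
      push_cast
      ring
    rw [hsum]
    nlinarith
  -- constants
  set β' : ℝ := (β : ℝ) - δ / 4 with hβ'def
  have hαβ' : (α : ℝ) < β' := by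
    simp only [hβ'def]; linarith
  set d : ℝ := β' - (α : ℝ) with hddef
  have hd : 0 < d := sub_pos.2 hαβ'
  set c₁ : ℝ := (α : ℝ) + d / 3 with hc₁def
  set c₂ : ℝ := (α : ℝ) + 2 * d / 3 with hc₂def
  have hαc₁ : (α : ℝ) < c₁ := by simp only [hc₁def]; linarith
  have hc₁c₂ : c₁ < c₂ := by simp only [hc₁def, hc₂def]; linarith
  have hc₂β' : c₂ < β' := by simp only [hc₂def, hddef]; linarith
  -- the bad invariant-ish set
  set D₀ : Set X := {x | FreqLt T f₁ x c₁ ∧ FreqGt T f₁ x c₂} with hD₀def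
  have hD₀m : MeasurableSet D₀ := by
    have heq : D₀ = (⋂ k : ℕ, ⋃ m : ℕ, {x | k ≤ m} ∩ {x | birkAvg T f₁ x m < c₁}) ∩
        (⋂ k : ℕ, ⋃ m : ℕ, {x | k ≤ m} ∩ {x | c₂ < birkAvg T f₁ x m}) := by
      ext x
      simp only [hD₀def, FreqLt, FreqGt, Set.mem_inter_iff, Set.mem_setOf_eq,
        Set.mem_iInter, Set.mem_iUnion] <;> tauto
    rw [heq]
    have hb := fun m => birkAvg_measurable hTm hf₁m m
    refine MeasurableSet.inter ?_ ?_ <;>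
      refine MeasurableSet.iInter fun k => MeasurableSet.iUnion fun m => ?_
    · exact (MeasurableSet.const _).inter (measurableSet_lt (hb m) measurable_const)
    · exact (MeasurableSet.const _).inter (measurableSet_lt measurable_const (hb m))
  set D' : Set X := ⋂ j : ℕ, T^[j] ⁻¹' D₀ with hD'def
  have hD'm : MeasurableSet D' := MeasurableSet.iInter fun j => (hTm.iterate j) hD₀m
  have hD'T : D' ⊆ T ⁻¹' D' := by
    intro x hx
    simp only [hD'def, Set.mem_iInter, Set.mem_preimage] at hx ⊢
    intro j
    have := hx (j + 1)
    rwa [Function.iterate_succ_apply] at this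
  have hD'null : μ D' = 0 := by
    have hsubP : D' ⊆ crossSet T (fun x => f₁ x - c₂) := by
      intro x hx
      have hx0 : x ∈ D₀ := by
        have := Set.mem_iInter.1 hx 0
        simpa using this
      obtain ⟨m, _, hm⟩ := hx0.2 0
      refine ⟨m, ?_⟩
      have hp : (0 : ℝ) < (m : ℝ) + 1 := by positivity
      rw [birkAvg, lt_div_iff₀ hp] at hm
      rw [Finset.sum_sub_distrib, Finset.sum_const, Finset.card_range, nsmul_eq_mul]
      push_cast
      nlinarith
    have hsubM : D' ⊆ crossSet T (fun x => c₁ - f₁ x) := by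
      intro x hx
      have hx0 : x ∈ D₀ := by
        have := Set.mem_iInter.1 hx 0
        simpa using this
      obtain ⟨m, _, hm⟩ := hx0.1 0
      refine ⟨m, ?_⟩
      have hp : (0 : ℝ) < (m : ℝ) + 1 := by positivity
      rw [birkAvg, div_lt_iff₀ hp] at hm
      rw [Finset.sum_sub_distrib, Finset.sum_const, Finset.card_range, nsmul_eq_mul]
      push_cast
      nlinarith
    have hPp : 0 ≤ ∫ x in D', (f₁ x - c₂) ∂μ := by
      have := maxErg (g := fun x => f₁ x - c₂) hT (hf₁m.sub measurable_const)
        (hf₁i.sub (integrable_const _)) hD'm hD'T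
      rwa [Set.inter_eq_left.2 hsubP] at this
    have hMm : 0 ≤ ∫ x in D', (c₁ - f₁ x) ∂μ := by
      have := maxErg (g := fun x => c₁ - f₁ x) hT (measurable_const.sub hf₁m)
        ((integrable_const _).sub hf₁i) hD'm hD'T
      rwa [Set.inter_eq_left.2 hsubM] at this
    have e1 : ∫ x in D', (f₁ x - c₂) ∂μ = ∫ x in D', f₁ x ∂μ - (μ D').toReal * c₂ := by
      rw [integral_sub hf₁i.integrableOn (integrable_const _).integrableOn,
        setIntegral_const, smul_eq_mul, measureReal_def]
    have e2 : ∫ x in D', (c₁ - f₁ x) ∂μ = (μ D').toReal * c₁ - ∫ x in D', f₁ x ∂μ := by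
      rw [integral_sub (integrable_const _).integrableOn hf₁i.integrableOn,
        setIntegral_const, smul_eq_mul, measureReal_def]
    rw [e1] at hPp
    rw [e2] at hMm
    have ht : (μ D').toReal = 0 := by
      by_contra hne
      have htpos : 0 < (μ D').toReal := lt_of_le_of_ne ENNReal.toReal_nonneg (Ne.symm hne)
      nlinarith [mul_pos htpos (sub_pos.2 hc₁c₂)]
    exact ((ENNReal.toReal_eq_zero_iff _).1 ht).resolve_right (measure_ne_top μ _)
  -- the bad set is contained in D'
  have hBad : ∀ x, x ∉ A₁ → (∀ N : ℕ, x ∈ GSet T f₁ h₁ (α : ℝ) (β : ℝ) (N + 1)) → x ∈ D' := by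
    intro x hxA hxG
    obtain ⟨hfl, hfg⟩ := freq_of_mem_GSet hxG
    have hfg' : FreqGt T f₁ x β' := by
      intro k
      obtain ⟨m, hk, hm⟩ := hfg k
      refine ⟨m, hk, ?_⟩
      have hav := hA₁c x hxA m
      rw [birkAvg_add] at hm
      simp only [hβ'def]
      linarith
    simp only [hD'def, Set.mem_iInter, Set.mem_preimage]
    intro j
    exact ⟨hfl.orbit hαc₁ j, hfg'.orbit hc₂β' j⟩
  -- choose the cut-off level M
  set B : ℕ → Set X := fun M => A₁ᶜ ∩ GSet T f₁ h₁ (α : ℝ) (β : ℝ) (M + 1) with hBdef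
  have hBm : ∀ M, MeasurableSet (B M) := fun M =>
    hA₁m.compl.inter (GSet_measurable hTm hf₁m hh₁m _ _ _)
  have hBanti : Antitone B := fun M M' hMM' =>
    Set.inter_subset_inter_right _ (GSet_anti (by omega))
  have hBnull : μ (⋂ M, B M) = 0 := by
    refine measure_mono_null (fun x hx => ?_) hD'null
    have hx' := Set.mem_iInter.1 hx
    exact hBad x (hx' 0).1 fun N => (hx' N).2
  have htend : Filter.Tendsto (fun M => μ (B M)) atTop (nhds 0) := by
    have h0 := tendsto_measure_iInter_atTop (μ := μ)
      (fun M => (hBm M).nullMeasurableSet) hBanti ⟨0, measure_ne_top μ _⟩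
    rw [hBnull] at h0
    exact h0
  have hgap : 0 < ENNReal.ofReal (4 * ε / δ) - μ A₁ := tsub_pos_of_lt hA₁small
  obtain ⟨M, hM⟩ := (htend.eventually_lt_const hgap).exists
  refine ⟨A₁ ∪ B M, hA₁m.union (hBm M), ?_, ?_⟩
  · calc μ (A₁ ∪ B M) ≤ μ A₁ + μ (B M) := measure_union_le _ _
      _ < μ A₁ + (ENNReal.ofReal (4 * ε / δ) - μ A₁) :=
          ENNReal.add_lt_add_left (measure_ne_top μ _) hM
      _ = ENNReal.ofReal (4 * ε / δ) := add_tsub_cancel_of_le hA₁small.le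
  · -- a.e. equality of looseCount for the modified functions
    have hN0 : μ {y | ¬(f y = f₁ y ∧ h y = h₁ y)} = 0 := ae_iff.1 (hff₁.and hhh₁)
    have horb : ∀ᵐ x ∂μ, ∀ j : ℕ, f (T^[j] x) = f₁ (T^[j] x) ∧ h (T^[j] x) = h₁ (T^[j] x) := by
      rw [ae_all_iff]
      intro j
      rw [ae_iff]
      refine measure_mono_null (fun x hx => ?_)
        (?_ : μ (T^[j] ⁻¹' (toMeasurable μ {y | ¬(f y = f₁ y ∧ h y = h₁ y)})) = 0)
      · exact Set.mem_preimage.2 (subset_toMeasurable μ _ hx)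
      · rw [(hT.iterate j).measure_preimage (measurableSet_toMeasurable _ _).nullMeasurableSet,
          measure_toMeasurable]
        exact hN0
    have hlc : (fun x => looseCount T f h (α : ℝ) (β : ℝ) x)
        =ᵐ[μ] fun x => looseCount T f₁ h₁ (α : ℝ) (β : ℝ) x := by
      refine horb.mono fun x hx => ?_
      have h3 : ∀ m, birkAvg T f x m = birkAvg T f₁ x m := fun m => by
        unfold birkAvg
        congr 1
        exact Finset.sum_congr rfl fun j _ => (hx j).1
      have h4 : ∀ m, birkAvg T (fun y => f y + h y) x m
          = birkAvg T (fun y => f₁ y + h₁ y) x m := fun m => by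
        unfold birkAvg
        congr 1
        refine Finset.sum_congr rfl fun j _ => ?_
        show f (T^[j] x) + h (T^[j] x) = f₁ (T^[j] x) + h₁ (T^[j] x)
        rw [(hx j).1, (hx j).2]
      have hset : ∀ N (u v : ℕ → ℕ), LooseUpcross T f h (α : ℝ) (β : ℝ) x N u v ↔
          LooseUpcross T f₁ h₁ (α : ℝ) (β : ℝ) x N u v := by
        intro N u v
        unfold LooseUpcross
        simp only [h3, h4]
      simp only [looseCount, hset]
    have hbound : ∀ x ∈ (A₁ ∪ B M)ᶜ, looseCount T f₁ h₁ (α : ℝ) (β : ℝ) x ≤ (M : ℝ≥0∞) := by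
      intro x hx
      rw [Set.mem_compl_iff, Set.mem_union] at hx
      push_neg at hx
      exact looseCount_le fun hG => hx.2 ⟨hx.1, hG⟩
    calc ∫⁻ x in (A₁ ∪ B M)ᶜ, looseCount T f h (α : ℝ) (β : ℝ) x ∂μ
        = ∫⁻ x in (A₁ ∪ B M)ᶜ, looseCount T f₁ h₁ (α : ℝ) (β : ℝ) x ∂μ :=
          lintegral_congr_ae (ae_restrict_of_ae hlc)
      _ ≤ ∫⁻ _x in (A₁ ∪ B M)ᶜ, (M : ℝ≥0∞) ∂μ := by
          refine lintegral_mono_ae ?_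
          exact (ae_restrict_mem (hA₁m.union (hBm M)).compl).mono fun x hx => hbound x hx
      _ = (M : ℝ≥0∞) * μ ((A₁ ∪ B M)ᶜ) := setLIntegral_const _ _
      _ < ⊤ := ENNReal.mul_lt_top (ENNReal.natCast_lt_top M) (measure_lt_top μ _)
end
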